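/- arXiv:2012.12585 — 2 statements merged into one kernel-verified Lean document; each statement's English description precedes it below -/
import Mathlib

section
/- The second scaled Legendre polynomial P̃₂(s) = P₂(-1 + 2s/L), where P₂(t) = (3t² - 1)/2, satisfies L[P̃₂](s̄) = -3·P̃₂(s̄) for all s̄ ∈ (0, L), i.e. it is an eigenfunction of the finite-part operator with eigenvalue -λ₂ = -(2/1 + 2/2) = -3. -/
open MeasureTheory intervalIntegral

lemma poly_int (A B u v : ℝ) :
    ∫ s in u..v, (A * s + B) = A * (v ^ 2 - u ^ 2) / 2 + B * (v - u) := by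
  rw [intervalIntegral.integral_add (f := fun s => A * s) (g := fun _ => B) ((continuous_const.mul continuous_id').intervalIntegrable _ _)
      (intervalIntegrable_const), intervalIntegral.integral_const_mul, integral_id,
      intervalIntegral.integral_const]
  simp [smul_eq_mul]; ring

theorem stmt_7 (L : ℝ) (hL : 0 < L) (P2 Pt2 : ℝ → ℝ)
    (hP2 : ∀ t, P2 t = (3 * t ^ 2 - 1) / 2)
    (hPt2 : ∀ s, Pt2 s = P2 (-1 + 2 * s / L))
    (sbar : ℝ) (hs : sbar ∈ Set.Ioo 0 L) :
    ∫ s in (0 : ℝ)..L, (Pt2 s - Pt2 sbar) / |s - sbar| = -3 * Pt2 sbar := by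
  obtain ⟨h0, hLs⟩ := hs
  have hLne : L ≠ 0 := hL.ne'
  have hPt : ∀ s, Pt2 s = 1 - 6 * s / L + 6 * s ^ 2 / L ^ 2 := by
    intro s; rw [hPt2, hP2]; field_simp; ring
  have hne : ∀ᵐ x : ℝ, x ≠ sbar := by
    simpa [ae_iff] using Real.volume_singleton (a := sbar)
  -- a.e. equality on the left piece
  have hcong1 : ∀ᵐ x : ℝ, x ∈ Set.uIoc (0:ℝ) sbar →
      (Pt2 x - Pt2 sbar) / |x - sbar| = (-6 / L ^ 2) * x + (-6 / L ^ 2 * sbar + 6 / L) := by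
    filter_upwards [hne] with x hx hmem
    rw [Set.uIoc_of_le h0.le] at hmem
    have hlt : x < sbar := lt_of_le_of_ne hmem.2 hx
    rw [hPt x, hPt sbar, abs_of_neg (by linarith : x - sbar < 0)]
    have h1 : sbar - x ≠ 0 := by linarith
    field_simp
    ring
  have hcong2 : ∀ᵐ x : ℝ, x ∈ Set.uIoc sbar L →
      (Pt2 x - Pt2 sbar) / |x - sbar| = (6 / L ^ 2) * x + (6 / L ^ 2 * sbar - 6 / L) := by
    filter_upwards [hne] with x hx hmem
    rw [Set.uIoc_of_le hLs.le] at hmem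
    have hlt : sbar < x := hmem.1
    rw [hPt x, hPt sbar, abs_of_pos (by linarith : 0 < x - sbar)]
    have h1 : x - sbar ≠ 0 := by linarith
    field_simp
    ring
  have hi1 : IntervalIntegrable (fun s => (Pt2 s - Pt2 sbar) / |s - sbar|) volume 0 sbar := by
    rw [intervalIntegrable_iff]
    exact (((continuous_const.mul continuous_id').add continuous_const).integrableOn_uIoc).congr_fun_ae
      ((ae_restrict_iff' measurableSet_uIoc).2 (hcong1.mono fun x hx hmem => (hx hmem).symm))
  have hi2 : IntervalIntegrable (fun s => (Pt2 s - Pt2 sbar) / |s - sbar|) volume sbar L := by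
    rw [intervalIntegrable_iff]
    exact (((continuous_const.mul continuous_id').add continuous_const).integrableOn_uIoc).congr_fun_ae
      ((ae_restrict_iff' measurableSet_uIoc).2 (hcong2.mono fun x hx hmem => (hx hmem).symm))
  rw [← intervalIntegral.integral_add_adjacent_intervals hi1 hi2,
      intervalIntegral.integral_congr_ae hcong1, intervalIntegral.integral_congr_ae hcong2,
      poly_int, poly_int, hPt]
  field_simp
  ring
end

section
/- Let x : [0,L] → ℝ³ be a C³ unit-speed curve and f : [0,L] → ℝ³ continuously differentiable. Define, for s ≠ s̄, g(s,s̄) = [ (I + R̂R̂ᵀ)·(|s-s̄|/|R|)·f(s) − (I + x'(s̄)x'(s̄)ᵀ)·f(s̄) ] / (s - s̄), where R = x(s) − x(s̄) and R̂ = R/|R|. Then g(s,s̄) has a finite limit as s → s̄, equal to ½(x'(s̄) x''(s̄)ᵀ + x''(s̄) x'(s̄)ᵀ) f(s̄) + (I + x'(s̄) x'(s̄)ᵀ) f'(s̄). -/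
open Filter Set Asymptotics Topology

theorem aux_dd {E : Type*} [NormedAddCommGroup E] [NormedSpace ℝ E]
    {x : ℝ → E} (hx : ContDiff ℝ 3 x) (a : ℝ) :
    HasDerivAt (fun s => if s = a then deriv x a else (s - a)⁻¹ • (x s - x a))
      ((2:ℝ)⁻¹ • deriv (deriv x) a) a := by
  set T := deriv x a with hTdef
  set A := deriv (deriv x) a with hAdef
  have hx2 : ContDiff ℝ 2 (deriv x) := by
    have : ContDiff ℝ (2+1) x := by exact_mod_cast hx
    exact (contDiff_succ_iff_deriv.mp this).2.2
  have hq : ∀ t, HasDerivAt x (deriv x t) t := fun t =>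
    ((hx.differentiable (by norm_num)) t).hasDerivAt
  have hq' : HasDerivAt (deriv x) A a :=
    ((hx2.differentiable (by norm_num)) a).hasDerivAt
  set e : ℝ → E := fun s => x s - x a - (s - a) • T - ((s - a)^2 / 2) • A with hedef
  have he : ∀ t, HasDerivAt e (deriv x t - T - (t - a) • A) t := by
    intro t
    have h1 : HasDerivAt (fun s : ℝ => (s - a) • T) ((1:ℝ) • T) t :=
      ((hasDerivAt_id t).sub_const a).smul_const T
    have h2 : HasDerivAt (fun s : ℝ => ((s - a)^2 / 2) • A) ((t - a) • A) t := by
      have : HasDerivAt (fun s : ℝ => (s - a)^2 / 2) (t - a) t := by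
        have := (((hasDerivAt_id t).sub_const a).pow 2).div_const 2
        simpa using this
      simpa using this.smul_const A
    have := ((hq t).sub_const (x a)).sub h1 |>.sub h2
    rw [one_smul] at this; exact this
  have hlo : (fun t => deriv x t - T - (t - a) • A) =o[𝓝 a] (fun t => t - a) :=
    hasDerivAt_iff_isLittleO.mp hq'
  rw [hasDerivAt_iff_isLittleO]
  have key : (fun s => (s - a)⁻¹ • e s) =o[𝓝 a] (fun s => s - a) := by
    rw [isLittleO_iff]
    intro c hc
    rw [isLittleO_iff] at hlo
    have hev := hlo hc
    rw [Metric.eventually_nhds_iff] at hev ⊢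
    obtain ⟨δ, hδ, hball⟩ := hev
    refine ⟨δ, hδ, fun s hsd => ?_⟩
    rcases eq_or_ne s a with rfl | hsne
    · simp
    · have hsub : uIcc a s ⊆ Metric.ball a δ := by
        intro t ht
        rw [Metric.mem_ball, Real.dist_eq]
        calc |t - a| ≤ |s - a| := abs_sub_left_of_mem_uIcc ht
          _ < δ := by rwa [Real.dist_eq] at hsd
      have hbound : ∀ t ∈ uIcc a s, ‖deriv x t - T - (t - a) • A‖ ≤ c * |s - a| := by
        intro t ht
        have htd : dist t a < δ := hsub ht
        have := hball htd
        refine this.trans ?_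
        have h1 : ‖t - a‖ ≤ |s - a| := by
          rw [Real.norm_eq_abs]; exact abs_sub_left_of_mem_uIcc ht
        nlinarith [abs_nonneg (s - a), hc.le]
      have hmvt := (convex_uIcc a s).norm_image_sub_le_of_norm_hasDerivWithin_le
        (fun t ht => (he t).hasDerivWithinAt) hbound (left_mem_uIcc) (right_mem_uIcc)
      have hea : e a = 0 := by simp [hedef]
      rw [hea, sub_zero] at hmvt
      have hne : (s - a) ≠ 0 := sub_ne_zero.mpr hsne
      rw [norm_smul, norm_inv, Real.norm_eq_abs]
      calc |s - a|⁻¹ * ‖e s‖ ≤ |s - a|⁻¹ * (c * |s - a| * ‖s - a‖) := by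
            apply mul_le_mul_of_nonneg_left hmvt (by positivity)
        _ = c * ‖s - a‖ := by
            rw [Real.norm_eq_abs]
            field_simp
  refine key.congr' ?_ (EventuallyEq.refl _ _)
  filter_upwards with s
  rcases eq_or_ne s a with rfl | hsne
  · simp [hedef]
  · have hne : (s - a) ≠ 0 := sub_ne_zero.mpr hsne
    simp only [if_neg hsne, if_pos rfl, hedef]
    have hc2 : (s - a)⁻¹ * ((s - a)^2 / 2) = (s - a) * 2⁻¹ := by
      field_simp
    rw [smul_sub, smul_sub, smul_smul, smul_smul, inv_mul_cancel₀ hne, one_smul,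
      smul_smul, hc2, if_true]

theorem stmt_14 (L : ℝ) (hL : 0 < L) (x f : ℝ → EuclideanSpace ℝ (Fin 3))
    (hx : ContDiff ℝ 3 x) (hf : ContDiff ℝ 1 f)
    (hunit : ∀ s ∈ Set.Icc (0 : ℝ) L, ‖deriv x s‖ = 1)
    (sbar : ℝ) (hs : sbar ∈ Set.Icc (0 : ℝ) L)
    (g : ℝ → EuclideanSpace ℝ (Fin 3))
    (hg : ∀ s,
      g s = (s - sbar)⁻¹ •
        ((|s - sbar| / ‖x s - x sbar‖) •
            (f s + (inner ℝ (‖x s - x sbar‖⁻¹ • (x s - x sbar)) (f s) : ℝ) •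
              (‖x s - x sbar‖⁻¹ • (x s - x sbar)))
          - (f sbar + (inner ℝ (deriv x sbar) (f sbar) : ℝ) • deriv x sbar))) :
    Filter.Tendsto g (nhdsWithin sbar (Set.Icc (0 : ℝ) L \ {sbar}))
      (nhds ((1 / 2 : ℝ) •
          ((inner ℝ (deriv (deriv x) sbar) (f sbar) : ℝ) • deriv x sbar
            + (inner ℝ (deriv x sbar) (f sbar) : ℝ) • deriv (deriv x) sbar)
        + deriv f sbar
        + (inner ℝ (deriv x sbar) (deriv f sbar) : ℝ) • deriv x sbar)) := by
  classical
  set T := deriv x sbar with hTdef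
  set A := deriv (deriv x) sbar with hAdef
  set v : ℝ → EuclideanSpace ℝ (Fin 3) :=
    fun s => if s = sbar then T else (s - sbar)⁻¹ • (x s - x sbar) with hvdef
  have hv : HasDerivAt v ((2:ℝ)⁻¹ • A) sbar := aux_dd hx sbar
  have hvsbar : v sbar = T := if_pos rfl
  have hT1 : ‖T‖ = 1 := hunit sbar hs
  have hx2 : ContDiff ℝ 2 (deriv x) := by
    have h3 : ContDiff ℝ (2+1) x := by exact_mod_cast hx
    exact (contDiff_succ_iff_deriv.mp h3).2.2
  have hq' : HasDerivAt (deriv x) A sbar :=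
    ((hx2.differentiable (by norm_num)) sbar).hasDerivAt
  have hf' : HasDerivAt f (deriv f sbar) sbar :=
    ((hf.differentiable (by norm_num)) sbar).hasDerivAt
  have hTA : (inner ℝ T A : ℝ) = 0 := by
    have hN : HasDerivAt (fun s => (inner ℝ (deriv x s) (deriv x s) : ℝ))
        ((inner ℝ (deriv x sbar) A : ℝ) + (inner ℝ A (deriv x sbar) : ℝ)) sbar :=
      HasDerivAt.inner ℝ hq' hq'
    have hu : UniqueDiffWithinAt ℝ (Set.Icc (0:ℝ) L) sbar := (uniqueDiffOn_Icc hL) sbar hs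
    have hconst : HasDerivWithinAt (fun s => (inner ℝ (deriv x s) (deriv x s) : ℝ))
        0 (Set.Icc (0:ℝ) L) sbar := by
      apply (hasDerivWithinAt_const sbar _ (1:ℝ)).congr
      · intro t ht
        rw [real_inner_self_eq_norm_mul_norm, hunit t ht, one_mul]
      · rw [real_inner_self_eq_norm_mul_norm, hunit sbar hs, one_mul]
    have h1 := hN.hasDerivWithinAt.derivWithin hu
    have h2 := hconst.derivWithin hu
    have h0 : (inner ℝ (deriv x sbar) A : ℝ) + (inner ℝ A (deriv x sbar) : ℝ) = 0 := by
      rw [← h1, h2]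
    rw [real_inner_comm A] at h0
    rw [← hTdef] at h0
    linarith
  set p : ℝ → ℝ := fun s => (inner ℝ (v s) (v s) : ℝ) with hpdef
  have hp1 : p sbar = 1 := by
    rw [hpdef]; simp only [hvsbar]
    rw [real_inner_self_eq_norm_mul_norm, hT1, one_mul]
  have hp : HasDerivAt p 0 sbar := by
    have h := HasDerivAt.inner ℝ hv hv
    refine h.congr_deriv ?_
    have hAT : (inner ℝ A T : ℝ) = 0 := by rw [real_inner_comm]; exact hTA
    rw [hvsbar, real_inner_smul_right, real_inner_smul_left, hTA, hAT]
    ring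
  set r : ℝ → ℝ := fun s => Real.sqrt (p s) with hrdef
  have hr1 : r sbar = 1 := by rw [hrdef]; simp [hp1]
  have hrn : ∀ s, r s = ‖v s‖ := by
    intro s
    rw [hrdef, hpdef]
    simp only []
    rw [real_inner_self_eq_norm_mul_norm, Real.sqrt_mul_self (norm_nonneg _)]
  have hr : HasDerivAt r 0 sbar := by
    have h := hp.sqrt (by rw [hp1]; norm_num)
    simpa [hp1] using h
  set G : ℝ → EuclideanSpace ℝ (Fin 3) :=
    fun s => (r s)⁻¹ • f s + (((r s)^3)⁻¹ * (inner ℝ (v s) (f s) : ℝ)) • v s with hGdef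
  have hGsbar : G sbar = f sbar + (inner ℝ T (f sbar) : ℝ) • T := by
    rw [hGdef]; simp [hr1, hvsbar]
  have hrinv : HasDerivAt (fun s => (r s)⁻¹) 0 sbar := by
    have h := hr.inv (by rw [hr1]; norm_num)
    exact h.congr_deriv (by simp)
  have h1 : HasDerivAt (fun s => (r s)⁻¹ • f s) (deriv f sbar) sbar := by
    have h := hrinv.smul hf'
    exact h.congr_deriv (by simp [hr1])
  have hvf : HasDerivAt (fun s => (inner ℝ (v s) (f s) : ℝ))
      ((inner ℝ T (deriv f sbar) : ℝ) + (inner ℝ ((2:ℝ)⁻¹ • A) (f sbar) : ℝ)) sbar := by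
    have h := HasDerivAt.inner ℝ hv hf'
    rwa [hvsbar] at h
  have hr3 : HasDerivAt (fun s => ((r s)^3)⁻¹) 0 sbar := by
    have h := (hr.pow 3).inv (by simp [hr1])
    exact h.congr_deriv (by simp)
  have hcoef : HasDerivAt (fun s => ((r s)^3)⁻¹ * (inner ℝ (v s) (f s) : ℝ))
      ((inner ℝ T (deriv f sbar) : ℝ) + (inner ℝ ((2:ℝ)⁻¹ • A) (f sbar) : ℝ)) sbar := by
    have h := hr3.mul hvf
    exact h.congr_deriv (by simp [hr1])
  have h2 : HasDerivAt (fun s => (((r s)^3)⁻¹ * (inner ℝ (v s) (f s) : ℝ)) • v s)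
      ((((r sbar)^3)⁻¹ * (inner ℝ (v sbar) (f sbar) : ℝ)) • ((2:ℝ)⁻¹ • A)
        + ((inner ℝ T (deriv f sbar) : ℝ) + (inner ℝ ((2:ℝ)⁻¹ • A) (f sbar) : ℝ)) • v sbar) sbar :=
    hcoef.smul hv
  have hG : HasDerivAt G
      ((1 / 2 : ℝ) • ((inner ℝ A (f sbar) : ℝ) • T + (inner ℝ T (f sbar) : ℝ) • A)
        + deriv f sbar + (inner ℝ T (deriv f sbar) : ℝ) • T) sbar := by
    have h := h1.add h2
    refine h.congr_deriv ?_
    rw [hr1, hvsbar]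
    simp only [real_inner_smul_left, one_pow, inv_one, one_mul]
    module
  have hslope := hasDerivAt_iff_tendsto_slope.mp hG
  have hmono : nhdsWithin sbar (Set.Icc (0:ℝ) L \ {sbar}) ≤ nhdsWithin sbar {sbar}ᶜ :=
    nhdsWithin_mono _ (fun t ht => ht.2)
  refine Filter.Tendsto.congr' ?_ (hslope.mono_left hmono)
  have hTne : T ≠ 0 := by
    intro h; rw [h, norm_zero] at hT1; norm_num at hT1
  have hvne : ∀ᶠ s in nhds sbar, v s ≠ 0 :=
    hv.continuousAt.eventually_ne (by rw [hvsbar]; exact hTne)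
  filter_upwards [hvne.filter_mono nhdsWithin_le_nhds, self_mem_nhdsWithin] with s hv0 hsmem
  have hsne : s ≠ sbar := by
    intro h; exact hsmem.2 (by simp [h])
  have hne : s - sbar ≠ 0 := sub_ne_zero.mpr hsne
  have hR : x s - x sbar = (s - sbar) • v s := by
    rw [hvdef]; simp only [if_neg hsne]
    rw [smul_smul, mul_inv_cancel₀ hne, one_smul]
  rw [slope_def_module, hg s]
  congr 1
  rw [hGsbar]
  congr 1
  have hnv : ‖v s‖ ≠ 0 := norm_ne_zero_iff.mpr hv0
  have habs : |s - sbar| ≠ 0 := abs_ne_zero.mpr hne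
  rw [hGdef]
  simp only [hR, hrn s, norm_smul, Real.norm_eq_abs]
  simp only [smul_smul, real_inner_smul_left, real_inner_smul_right, smul_add]
  match_scalars
  · field_simp
  · have hsq : |s - sbar| * |s - sbar| = (s - sbar) * (s - sbar) := abs_mul_abs_self _
    field_simp
    linear_combination (inner ℝ (v s) (f s)) * hsq
end
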